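/- The traced Euler characteristic of a bounded complex over a linear category is a homotopy invariant: if complexes A and B over 𝒞 are chain homotopy equivalent, then Σᵢ (−1)ⁱ [1_{Aᵢ}] = Σᵢ (−1)ⁱ [1_{Bᵢ}] in Tr(𝒞). -/

import Mathlib

open CategoryTheory
open scoped DirectSum Classical

noncomputable section

/-- The relations `f ≫ g - g ≫ f` defining the trace of a linear category. -/
def traceRelations (C : Type*) [Category C] [Preadditive C] :
    AddSubgroup (⨁ x : C, (x ⟶ x)) :=
  AddSubgroup.closure
    { h | ∃ (x y : C) (f : x ⟶ y) (g : y ⟶ x),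
        h = DirectSum.of (fun z : C => z ⟶ z) x (f ≫ g)
          - DirectSum.of (fun z : C => z ⟶ z) y (g ≫ f) }

/-- The trace of a linear category, `Tr(𝒞) = (⊕_x 𝒞(x,x)) / Span{fg − gf}`. -/
abbrev CatTrace (C : Type*) [Category C] [Preadditive C] :=
  (⨁ x : C, (x ⟶ x)) ⧸ traceRelations C

/-- The class `[f]` of an endomorphism in the trace of the category. -/
def traceClass {C : Type*} [Category C] [Preadditive C] {x : C} (f : x ⟶ x) :
    CatTrace C :=
  QuotientAddGroup.mk (DirectSum.of (fun z : C => z ⟶ z) x f)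

open CategoryTheory.Limits

section Aux

variable {C : Type*} [Category C] [Preadditive C]

lemma traceClass_add {x : C} (f g : x ⟶ x) :
    traceClass (f + g) = traceClass f + traceClass g := by
  simp only [traceClass, map_add]
  rfl

lemma traceClass_zero (x : C) : traceClass (0 : x ⟶ x) = 0 := by
  simp only [traceClass, map_zero]
  rfl

lemma traceClass_eq_zero {x : C} (hx : IsZero x) (f : x ⟶ x) :
    traceClass f = 0 := by
  rw [hx.eq_of_src f 0]
  exact traceClass_zero x

lemma traceClass_comm {x y : C} (f : x ⟶ y) (g : y ⟶ x) :
    traceClass (f ≫ g) = traceClass (g ≫ f) := by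
  refine QuotientAddGroup.eq.mpr ?_
  have h : (DirectSum.of (fun z : C => z ⟶ z) x (f ≫ g)
      - DirectSum.of (fun z : C => z ⟶ z) y (g ≫ f)) ∈ traceRelations C :=
    AddSubgroup.subset_closure ⟨x, y, f, g, rfl⟩
  have := (traceRelations C).neg_mem h
  simpa [neg_sub, sub_eq_neg_add] using this

/-- Key lemma: homotopic endomorphisms of a bounded complex have the same
alternating-sum trace. -/
lemma sum_traceClass_eq_of_homotopy
    {A : HomologicalComplex C (ComplexShape.down ℤ)}
    (s : Finset ℤ) (hA : ∀ i ∉ s, IsZero (A.X i))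
    {f g : A ⟶ A} (H : Homotopy f g) :
    ∑ i ∈ s, (Int.negOnePow i : ℤ) • traceClass (f.f i) =
      ∑ i ∈ s, (Int.negOnePow i : ℤ) • traceClass (g.f i) := by
  classical
  set φ : ∀ i : ℤ, A.X i ⟶ A.X i := fun i => A.d i (i - 1) ≫ H.hom (i - 1) i with hφ
  have hcomm : ∀ i : ℤ, f.f i = φ i + (H.hom i (i + 1) ≫ A.d (i + 1) i) + g.f i := by
    intro i
    have h1 : (ComplexShape.down ℤ).Rel i (i - 1) := by simp [ComplexShape.down]
    have h2 : (ComplexShape.down ℤ).Rel (i + 1) i := by simp [ComplexShape.down]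
    have := H.comm i
    rwa [dNext_eq _ h1, prevD_eq _ h2] at this
  -- trace of the second homotopy term equals trace of φ (i+1)
  have hψ : ∀ i : ℤ, traceClass (H.hom i (i + 1) ≫ A.d (i + 1) i)
      = traceClass (φ (i + 1)) := by
    intro i
    rw [traceClass_comm]
    congr 1
    simp only [hφ]
    rw [show (i : ℤ) + 1 - 1 = i from by ring]
  -- vanishing of φ-traces
  have hφ_zero : ∀ j : ℤ, j ∉ s ∨ (j - 1) ∉ s → traceClass (φ j) = 0 := by
    intro j hj
    rcases hj with hj | hj
    · exact traceClass_eq_zero (hA j hj) _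
    · have : H.hom (j - 1) j = 0 := (hA _ hj).eq_of_src _ _
      simp only [hφ, this, Limits.comp_zero]
      exact traceClass_zero _
  set F : ℤ → CatTrace C := fun j => (Int.negOnePow j : ℤ) • traceClass (φ j) with hF
  have hF_zero : ∀ j : ℤ, j ∉ s ∨ (j - 1) ∉ s → F j = 0 := by
    intro j hj
    simp [hF, hφ_zero j hj]
  -- the telescoping cancellation
  have key : ∑ i ∈ s, F i = ∑ i ∈ s, F (i + 1) := by
    have himg : ∑ i ∈ s, F (i + 1) = ∑ j ∈ s.image (· + 1), F j := by
      rw [Finset.sum_image]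
      intro a _ b _ h
      have h' : a + 1 = b + 1 := h
      omega
    set V := s ∩ s.image (· + 1) with hV
    have h1 : ∑ i ∈ s, F i = ∑ i ∈ V, F i := by
      refine (Finset.sum_subset Finset.inter_subset_left ?_).symm
      intro i hi hiV
      apply hF_zero
      right
      intro hcon
      exact hiV (Finset.mem_inter.mpr ⟨hi, Finset.mem_image.mpr ⟨i - 1, hcon, by ring⟩⟩)
    have h2 : ∑ j ∈ s.image (· + 1), F j = ∑ j ∈ V, F j := by
      refine (Finset.sum_subset Finset.inter_subset_right ?_).symm
      intro j hj hjV
      apply hF_zero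
      left
      intro hcon
      exact hjV (Finset.mem_inter.mpr ⟨hcon, hj⟩)
    rw [himg, h1, h2]
  calc ∑ i ∈ s, (Int.negOnePow i : ℤ) • traceClass (f.f i)
      = ∑ i ∈ s, ((Int.negOnePow i : ℤ) • traceClass (g.f i) + (F i + - F (i + 1))) := by
        refine Finset.sum_congr rfl fun i _ => ?_
        rw [hcomm i, traceClass_add, traceClass_add, hψ i, smul_add, smul_add]
        have hneg : (Int.negOnePow i : ℤ) • traceClass (φ (i + 1)) = - F (i + 1) := by
          simp only [hF, Int.negOnePow_succ]
          push_cast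
          rw [neg_smul, neg_neg]
        rw [hneg]
        abel
    _ = ∑ i ∈ s, (Int.negOnePow i : ℤ) • traceClass (g.f i)
          + (∑ i ∈ s, F i - ∑ i ∈ s, F (i + 1)) := by
        rw [Finset.sum_add_distrib, Finset.sum_add_distrib, Finset.sum_neg_distrib]
        abel
    _ = ∑ i ∈ s, (Int.negOnePow i : ℤ) • traceClass (g.f i) := by
        rw [key]; abel

end Aux

/-- The traced Euler characteristic of a bounded complex over a linear category
is a homotopy invariant: if bounded complexes `A` and `B` are chain homotopy
equivalent, then `Σᵢ (−1)ⁱ [1_{Aᵢ}] = Σᵢ (−1)ⁱ [1_{Bᵢ}]` in `Tr(𝒞)`. -/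
theorem tracedEuler_homotopy_invariant {C : Type*} [Category C] [Preadditive C]
    (A B : HomologicalComplex C (ComplexShape.down ℤ))
    (e : HomotopyEquiv A B)
    (s t : Finset ℤ) (hA : ∀ i ∉ s, IsZero (A.X i)) (hB : ∀ i ∉ t, IsZero (B.X i)) :
    ∑ i ∈ s, (Int.negOnePow i : ℤ) • traceClass (𝟙 (A.X i)) =
      ∑ i ∈ t, (Int.negOnePow i : ℤ) • traceClass (𝟙 (B.X i)) := by
  classical
  have h1 : ∑ i ∈ s, (Int.negOnePow i : ℤ) • traceClass (𝟙 (A.X i)) =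
      ∑ i ∈ s, (Int.negOnePow i : ℤ) • traceClass ((e.hom ≫ e.inv).f i) := by
    have := sum_traceClass_eq_of_homotopy s hA e.homotopyHomInvId
    simpa using this.symm
  have h2 : ∑ i ∈ t, (Int.negOnePow i : ℤ) • traceClass ((e.inv ≫ e.hom).f i) =
      ∑ i ∈ t, (Int.negOnePow i : ℤ) • traceClass (𝟙 (B.X i)) := by
    have := sum_traceClass_eq_of_homotopy t hB e.homotopyInvHomId
    simpa using this
  rw [h1, ← h2]
  -- swap composition and change index set
  have hswap : ∀ i : ℤ, traceClass ((e.hom ≫ e.inv).f i)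
      = traceClass (e.inv.f i ≫ e.hom.f i) := by
    intro i
    rw [HomologicalComplex.comp_f]
    exact traceClass_comm _ _
  simp only [hswap]
  have hswap' : ∀ i : ℤ, traceClass ((e.inv ≫ e.hom).f i)
      = traceClass (e.inv.f i ≫ e.hom.f i) := by
    intro i
    rw [HomologicalComplex.comp_f]
  simp only [hswap']
  set G : ℤ → CatTrace C := fun i => (Int.negOnePow i : ℤ) • traceClass (e.inv.f i ≫ e.hom.f i)
    with hG
  show ∑ i ∈ s, G i = ∑ i ∈ t, G i
  have hGs : ∀ i : ℤ, i ∉ s → G i = 0 := by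
    intro i hi
    have : e.hom.f i = 0 := (hA i hi).eq_of_src _ _
    simp [hG, this, traceClass_zero]
  have hGt : ∀ i : ℤ, i ∉ t → G i = 0 := by
    intro i hi
    simp [hG, traceClass_eq_zero (hB i hi)]
  calc ∑ i ∈ s, G i = ∑ i ∈ s ∪ t, G i := by
        refine Finset.sum_subset Finset.subset_union_left fun i _ hi => hGs i hi
    _ = ∑ i ∈ t, G i := by
        refine (Finset.sum_subset Finset.subset_union_right fun i _ hi => hGt i hi).symm
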